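/- Let m, k be positive integers with k ≥ 1 and 5k² ≤ m, set N = m − 1, let h > 0, and let a₁,...,a_N and b₁,...,b_N be nonnegative reals each summing to at most h. Call an index i ∈ {1,...,N} unsuitable if max(aᵢ,bᵢ) > 2h(k+1)/N. Then there exist k consecutive indices in {1,...,N} none of which is unsuitable. -/

import Mathlib

theorem stmt9 (m k : ℕ) (hk : 1 ≤ k) (hm : 5 * k ^ 2 ≤ m) (h : ℝ) (hh : 0 < h)
    (a b : ℕ → ℝ)
    (ha : ∀ i ∈ Finset.Icc 1 (m - 1), 0 ≤ a i)
    (hb : ∀ i ∈ Finset.Icc 1 (m - 1), 0 ≤ b i)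
    (hsa : ∑ i ∈ Finset.Icc 1 (m - 1), a i ≤ h)
    (hsb : ∑ i ∈ Finset.Icc 1 (m - 1), b i ≤ h) :
    ∃ j : ℕ, 1 ≤ j ∧ j + k - 1 ≤ m - 1 ∧
      ∀ i : ℕ, j ≤ i → i ≤ j + k - 1 →
        max (a i) (b i) ≤ 2 * h * ((k:ℝ) + 1) / ((m:ℝ) - 1) := by
  set N := m - 1 with hNdef
  have hm5 : 5 ≤ m := le_trans (by nlinarith) hm
  have hNk : k * (k + 1) ≤ N := by
    have : k * (k + 1) + 1 ≤ 5 * k ^ 2 := by nlinarith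
    omega
  have hN1 : 1 ≤ N := by omega
  have hNR : ((N : ℕ) : ℝ) = (m : ℝ) - 1 := by
    have : (m : ℝ) = ((N + 1 : ℕ) : ℝ) := by congr 1; omega
    rw [this]; push_cast; ring
  have hNpos : (0 : ℝ) < (m : ℝ) - 1 := by
    rw [← hNR]; exact_mod_cast hN1
  set T : ℝ := 2 * h * ((k : ℝ) + 1) / ((m : ℝ) - 1) with hTdef
  have hTpos : 0 < T := by
    apply div_pos
    · positivity
    · exact hNpos
  by_contra hcon
  push_neg at hcon
  set U := (Finset.Icc 1 N).filter (fun i => T < max (a i) (b i)) with hUdef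
  -- upper bound on card U
  have hsum : (U.card : ℝ) * T ≤ ∑ i ∈ U, (a i + b i) := by
    have := Finset.card_nsmul_le_sum U (fun i => a i + b i) T (by
      intro i hi
      simp only [hUdef, Finset.mem_filter] at hi
      have hai := ha i hi.1
      have hbi := hb i hi.1
      have hmx : max (a i) (b i) ≤ a i + b i :=
        max_le (le_add_of_nonneg_right hbi) (le_add_of_nonneg_left hai)
      show T ≤ a i + b i
      linarith [hi.2])
    simpa [nsmul_eq_mul] using this
  have hsub : U ⊆ Finset.Icc 1 N := Finset.filter_subset _ _
  have hsum2 : ∑ i ∈ U, (a i + b i) ≤ 2 * h := by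
    rw [Finset.sum_add_distrib]
    have h1 : ∑ i ∈ U, a i ≤ ∑ i ∈ Finset.Icc 1 N, a i :=
      Finset.sum_le_sum_of_subset_of_nonneg hsub (fun i hi _ => ha i hi)
    have h2 : ∑ i ∈ U, b i ≤ ∑ i ∈ Finset.Icc 1 N, b i :=
      Finset.sum_le_sum_of_subset_of_nonneg hsub (fun i hi _ => hb i hi)
    linarith
  have hcard_up : U.card * (k + 1) ≤ N := by
    have h1 : (U.card : ℝ) * T ≤ 2 * h := le_trans hsum hsum2
    have h2 : (U.card : ℝ) * T * ((m : ℝ) - 1) = (U.card : ℝ) * (2 * h * ((k : ℝ) + 1)) := by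
      rw [hTdef]; field_simp
    have hR : (U.card : ℝ) * (2 * h * ((k : ℝ) + 1)) ≤ 2 * h * ((m : ℝ) - 1) := by
      rw [← h2]
      exact mul_le_mul_of_nonneg_right h1 hNpos.le
    have hcast : (U.card : ℝ) * ((k : ℝ) + 1) ≤ (m : ℝ) - 1 := by nlinarith
    rw [← hNR] at hcast
    exact_mod_cast hcast
  -- lower bound: injection from range (N / k)
  have hw : ∀ q : ℕ, ∃ i : ℕ, q < N / k → i ∈ U ∧ q * k + 1 ≤ i ∧ i ≤ q * k + k := by
    intro q
    by_cases hq : q < N / k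
    · have hwin : q * k + 1 + k - 1 ≤ N := by
        have h2 : q * k + k ≤ N := by
          calc q * k + k = (q + 1) * k := by ring
            _ ≤ (N / k) * k := Nat.mul_le_mul_right k hq
            _ ≤ N := Nat.div_mul_le_self N k
        have h3 : q * k + 1 + k - 1 = q * k + k := by omega
        rw [h3]; exact h2
      obtain ⟨i, hi1, hi2, hi3⟩ := hcon (q * k + 1) (by omega) hwin
      refine ⟨i, fun _ => ⟨?_, by omega, by omega⟩⟩
      simp only [hUdef, Finset.mem_filter, Finset.mem_Icc]
      exact ⟨⟨by omega, by omega⟩, hi3⟩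
    · exact ⟨0, fun h => absurd h hq⟩
  choose f hf using hw
  have hcard_lo : N / k ≤ U.card := by
    rw [← Finset.card_range (N / k)]
    apply Finset.card_le_card_of_injOn f
    · intro q hq
      exact (hf q (Finset.mem_range.1 hq)).1
    · intro q1 hq1 q2 hq2 heq
      obtain ⟨_, h11, h12⟩ := hf q1 (Finset.mem_range.1 hq1)
      obtain ⟨_, h21, h22⟩ := hf q2 (Finset.mem_range.1 hq2)
      rw [heq] at h11 h12
      rcases Nat.lt_trichotomy q1 q2 with hlt | heq' | hgt
      · exfalso; nlinarith
      · exact heq'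
      · exfalso; nlinarith
  -- arithmetic contradiction
  have hq1 : U.card ≤ N / (k + 1) := (Nat.le_div_iff_mul_le (by omega)).2 hcard_up
  have hk' : k ≤ N / (k + 1) := (Nat.le_div_iff_mul_le (by omega)).2 hNk
  have h2 : N / (k + 1) + 1 ≤ N / k := by
    apply (Nat.le_div_iff_mul_le (by omega)).2
    have hle : N / (k + 1) * (k + 1) ≤ N := Nat.div_mul_le_self N (k + 1)
    nlinarith
  omega
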